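/- For 0 < λ ≤ 1: the function a(ν) = (ν-2) Γ((ν-1)/2)² / (2 Γ(ν/2)²) satisfies 0 < a(ν) ≤ 1 for all ν > 2, and lim_{ν→∞} a(ν) = 1. -/
import Mathlib


open Real

/-- Pochhammer symbol `(s)_k`. -/
noncomputable def poch (s : ℝ) (k : ℕ) : ℝ := (ascPochhammer ℝ k).eval s

/-- Gauss hypergeometric function `₂F₁(a,b;c;x)` as a series. -/
noncomputable def hyp2F1 (a b c x : ℝ) : ℝ :=
  ∑' k : ℕ, poch a k * poch b k / poch c k * x ^ k / (Nat.factorial k)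

/-- The factor `a(ν) = (ν-2)Γ((ν-1)/2)²/(2Γ(ν/2)²)`. -/
noncomputable def acoef (ν : ℝ) : ℝ :=
  (ν - 2) * Real.Gamma ((ν-1)/2) ^ 2 / (2 * Real.Gamma (ν/2) ^ 2)

/-- The correlation map of the standardized `t` process. -/
noncomputable def gfun (ν x : ℝ) : ℝ := acoef ν * x * hyp2F1 (1/2) (1/2) (ν/2) (x^2)

lemma gamma_mid_sq_le {a b : ℝ} (ha : 0 < a) (hb : 0 < b) :
    Real.Gamma ((a+b)/2) ^ 2 ≤ Real.Gamma a * Real.Gamma b := by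
  have h := Real.convexOn_log_Gamma.2 (Set.mem_Ioi.mpr ha) (Set.mem_Ioi.mpr hb)
    (by norm_num : (0:ℝ) ≤ 1/2) (by norm_num : (0:ℝ) ≤ 1/2) (by norm_num)
  simp only [smul_eq_mul, Function.comp_apply] at h
  have hmid : (1/2 : ℝ) * a + (1/2) * b = (a+b)/2 := by ring
  rw [hmid] at h
  have hga := Real.Gamma_pos_of_pos ha
  have hgb := Real.Gamma_pos_of_pos hb
  have hgm := Real.Gamma_pos_of_pos (by linarith : 0 < (a+b)/2)
  have := Real.exp_le_exp.mpr (by linarith : 2 * Real.log (Real.Gamma ((a+b)/2)) ≤ Real.log (Real.Gamma a) + Real.log (Real.Gamma b))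
  rwa [Real.exp_add, Real.exp_log hga, Real.exp_log hgb,
    show (2:ℝ) * Real.log (Real.Gamma ((a+b)/2)) = Real.log (Real.Gamma ((a+b)/2)) + Real.log (Real.Gamma ((a+b)/2)) by ring,
    Real.exp_add, Real.exp_log hgm, ← sq] at this

lemma acoef_bounds {ν : ℝ} (hν : 2 < ν) :
    (ν-2)/(ν-1) ≤ acoef ν ∧ acoef ν ≤ 1 ∧ 0 < acoef ν := by
  have hν2 : 0 < ν/2 - 1 := by linarith
  have hν1 : 0 < (ν-1)/2 := by linarith
  have hν0 : 0 < ν/2 := by linarith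
  have hν3 : 0 < (ν+1)/2 := by linarith
  have hg1 := Real.Gamma_pos_of_pos hν1
  have hg := Real.Gamma_pos_of_pos hν0
  have hg0 := Real.Gamma_pos_of_pos hν2
  have hrec : Real.Gamma (ν/2) = (ν/2-1) * Real.Gamma (ν/2-1) := by
    have := Real.Gamma_add_one (ne_of_gt hν2)
    rwa [show ν/2-1+1 = ν/2 by ring] at this
  have hrec2 : Real.Gamma ((ν+1)/2) = ((ν-1)/2) * Real.Gamma ((ν-1)/2) := by
    have := Real.Gamma_add_one (ne_of_gt hν1)
    rwa [show (ν-1)/2+1 = (ν+1)/2 by ring] at this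
  have hup : Real.Gamma ((ν-1)/2) ^ 2 ≤ Real.Gamma (ν/2-1) * Real.Gamma (ν/2) := by
    have := gamma_mid_sq_le hν2 hν0
    rwa [show (ν/2-1 + ν/2)/2 = (ν-1)/2 by ring] at this
  have hlo : Real.Gamma (ν/2) ^ 2 ≤ ((ν-1)/2) * Real.Gamma ((ν-1)/2) ^ 2 := by
    have := gamma_mid_sq_le hν1 hν3
    rw [show ((ν-1)/2 + (ν+1)/2)/2 = ν/2 by ring, hrec2] at this
    nlinarith [this]
  have hden : (0:ℝ) < 2 * Real.Gamma (ν/2) ^ 2 := by positivity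
  refine ⟨?_, ?_, ?_⟩
  · rw [acoef, div_le_div_iff₀ (by linarith) hden]
    nlinarith [hlo]
  · rw [acoef, div_le_one hden]
    nlinarith [hup, hrec, sq_nonneg (Real.Gamma ((ν-1)/2))]
  · exact div_pos (mul_pos (by linarith) (pow_pos hg1 2)) hden

lemma lower_tendsto : Filter.Tendsto (fun ν : ℝ => (ν-2)/(ν-1)) Filter.atTop (nhds 1) := by
  have h : Filter.Tendsto (fun ν : ℝ => 1 - (ν-1)⁻¹) Filter.atTop (nhds (1 - 0)) :=
    tendsto_const_nhds.sub (tendsto_inv_atTop_zero.comp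
      (Filter.tendsto_atTop_add_const_right _ (-1) Filter.tendsto_id))
  rw [sub_zero] at h
  refine h.congr' ?_
  filter_upwards [Filter.eventually_gt_atTop (1:ℝ)] with ν hν
  have : ν - 1 ≠ 0 := by linarith
  field_simp
  ring

/-- `0 < a(ν) ≤ 1` for all `ν > 2`, and `a(ν) → 1` as `ν → ∞`. -/
theorem stmt7 :
    (∀ ν : ℝ, 2 < ν → 0 < acoef ν ∧ acoef ν ≤ 1) ∧
    Filter.Tendsto acoef Filter.atTop (nhds 1) := by
  constructor
  · intro ν hν
    exact ⟨(acoef_bounds hν).2.2, (acoef_bounds hν).2.1⟩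
  · refine tendsto_of_tendsto_of_tendsto_of_le_of_le' lower_tendsto tendsto_const_nhds ?_ ?_
    · filter_upwards [Filter.eventually_gt_atTop (2:ℝ)] with ν hν
      exact (acoef_bounds hν).1
    · filter_upwards [Filter.eventually_gt_atTop (2:ℝ)] with ν hν
      exact (acoef_bounds hν).2.1
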